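/- In case (2) of the map φ, where Q = n_0 Q_1 ⋯ Q_k with all n_1 = ⋯ = n_k = ∅: letting m be the final maximal run of north steps of Q minus one step, and Q' the path Q with n_0 and m erased, the path φ(D) = P m Q' n_0 R is a Dyck path of the same semilength with returns(φ(D)) = returns(D) + 1 and ldr(φ(D)) = ldr(D) + 1. -/

import Mathlib

/-!
Dyck paths are encoded as lists of booleans: `true` is a north step `(0,1)`,
`false` is an east step `(1,0)`.  A Dyck path of semilength `n` goes from
`(0,0)` to `(n,n)` staying weakly above the diagonal `y = x`.
-/

/-- `D` is a Dyck word: every prefix has at least as many north steps as east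
steps, and the total numbers agree. -/
def isDyck (D : List Bool) : Bool :=
  ((List.range (D.length + 1)).all fun k =>
    (D.take k).count false ≤ (D.take k).count true) &&
  (D.count true == D.count false)

/-- The (finite) set of Dyck paths of semilength `n`. -/
def dyckPaths (n : ℕ) : Finset (List Bool) :=
  ((List.replicate n true ++ List.replicate n false).permutations.filter isDyck).toFinset

/-- The number of returns: east steps ending on the diagonal `y = x`. -/
def returns (D : List Bool) : ℕ :=
  ((List.range D.length).filter fun i =>
    (D[i]? == some false) &&
    ((D.take (i + 1)).count true == (D.take (i + 1)).count false)).length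

/-- `ldr D`: the `y`-coordinate of the midpoint of the last double rise
(last pair of consecutive north steps), `0` if there is no double rise. -/
def ldr (D : List Bool) : ℕ :=
  match ((List.range D.length).filter fun i =>
      (D[i]? == some true) && (D[i+1]? == some true)).getLast? with
  | some i => (D.take (i + 1)).count true
  | none => 0

/-- The set of `x`-coordinates (plus 1) of the north steps of `D`. -/
def rises (D : List Bool) : Finset ℕ :=
  (((List.range D.length).filter fun i => D[i]? == some true).map
    fun i => (D.take i).count false + 1).toFinset

/-- The multiset of `x`-coordinates (plus 1) of the north steps of `D`. -/
def risesM (D : List Bool) : Multiset ℕ :=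
  ↑(((List.range D.length).filter fun i => D[i]? == some true).map
    fun i => (D.take i).count false + 1)

/-- `D` ends with a single east step: its last maximal run of east steps has
length one, i.e. `D` ends with a north step followed by one east step. -/
def EndsSingleEast (D : List Bool) : Prop :=
  ∃ P, D = P ++ [true, false]

/-- `R` contains only single rises: no two consecutive north steps. -/
def SingleRises (R : List Bool) : Prop :=
  ∀ i, ¬ (R[i]? = some true ∧ R[i+1]? = some true)

/-- A prime Dyck path: a Dyck path whose only return is its final east step. -/
def IsPrimeDyck (Q : List Bool) : Prop :=
  isDyck Q = true ∧ Q ≠ [] ∧ returns Q = 1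

/-- Concatenation `n₀ Q₁ n₁ Q₂ ⋯` of runs of north steps and paths, encoded as a
list of pairs `(nᵢ₋₁, Qᵢ)`. -/
def primeBlocks (l : List (ℕ × List Bool)) : List Bool :=
  (l.map fun p => List.replicate p.1 true ++ p.2).flatten

namespace S7

lemma isDyck_iff {L : List Bool} : isDyck L = true ↔
    (∀ k, (L.take k).count false ≤ (L.take k).count true) ∧ L.count true = L.count false := by
  unfold isDyck
  simp only [Bool.and_eq_true, List.all_eq_true, List.mem_range, decide_eq_true_eq,
    beq_iff_eq, Nat.lt_succ_iff]
  constructor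
  · rintro ⟨h1, h2⟩
    refine ⟨fun k => ?_, h2⟩
    by_cases hk : k ≤ L.length
    · exact h1 k hk
    · rw [List.take_of_length_le (by omega)]
      have := h1 L.length le_rfl
      rwa [List.take_length] at this
  · rintro ⟨h1, h2⟩
    exact ⟨fun k _ => h1 k, h2⟩

lemma mem_dyckPaths {n : ℕ} {L : List Bool} :
    L ∈ dyckPaths n ↔ isDyck L = true ∧ L.count true = n ∧ L.count false = n := by
  unfold dyckPaths
  rw [List.mem_toFinset, List.mem_filter, List.mem_permutations]
  constructor
  · rintro ⟨hp, hd⟩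
    refine ⟨hd, ?_, ?_⟩ <;> rw [hp.count_eq] <;>
      simp [List.count_append, List.count_replicate]
  · rintro ⟨hd, ht, hf⟩
    refine ⟨List.perm_iff_count.2 fun a => ?_, hd⟩
    cases a <;> simp [List.count_append, List.count_replicate, ht, hf]

def rpred (L : List Bool) (i : ℕ) : Bool :=
  (L[i]? == some false) && ((L.take (i + 1)).count true == (L.take (i + 1)).count false)

lemma returns_eq_countP (L : List Bool) :
    returns L = (List.range L.length).countP (rpred L) := by
  rw [returns]
  exact List.countP_eq_length_filter.symm

lemma count_take_app (b : Bool) (X Y : List Bool) (k : ℕ) :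
    ((X ++ Y).take k).count b = (X.take k).count b + (Y.take (k - X.length)).count b := by
  rw [List.take_append, List.count_append]

lemma count_take_rep (a b : Bool) (m k : ℕ) :
    (((List.replicate m a)).take k).count b = if a = b then min k m else 0 := by
  rw [List.take_replicate, List.count_replicate]
  simp [beq_iff_eq]

lemma count_take_single (a b : Bool) (k : ℕ) :
    (([a]).take k).count b = if a = b then min k 1 else 0 := by
  rw [show [a] = List.replicate 1 a from rfl, count_take_rep]

lemma returns_append {A B : List Bool} (h : A.count true = A.count false) :
    returns (A ++ B) = returns A + returns B := by
  rw [returns_eq_countP, returns_eq_countP, returns_eq_countP, List.length_append,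
    List.range_add, List.countP_append, List.countP_map]
  congr 1
  · apply List.countP_congr
    intro i hi
    rw [List.mem_range] at hi
    unfold rpred
    rw [List.getElem?_append_left hi, List.take_append_of_le_length (by omega)]
  · apply List.countP_congr
    intro i hi
    rw [List.mem_range] at hi
    simp only [Function.comp, rpred, Bool.and_eq_true, beq_iff_eq]
    rw [List.getElem?_append_right (by omega : A.length ≤ A.length + i),
      count_take_app, count_take_app, List.take_of_length_le (by omega : A.length ≤ A.length + i + 1)]
    have e1 : A.length + i - A.length = i := by omega
    have e2 : A.length + i + 1 - A.length = i + 1 := by omega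
    rw [e1, e2]
    constructor
    · rintro ⟨h1, h2⟩; exact ⟨h1, by omega⟩
    · rintro ⟨h1, h2⟩; exact ⟨h1, by omega⟩

lemma last_eq_false {L : List Bool} (hne : L ≠ []) (hbal : L.count true = L.count false)
    (hpref : ∀ k, (L.take k).count false ≤ (L.take k).count true) :
    L[L.length - 1]? = some false := by
  have hd := List.dropLast_append_getLast hne
  have hget : L[L.length - 1]? = some (L.getLast hne) := by
    rw [← List.getLast?_eq_getElem?]; exact List.getLast?_eq_getLast hne
  cases hb : L.getLast hne
  · rwa [hb] at hget
  · exfalso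
    have hp := hpref (L.length - 1)
    rw [← List.dropLast_eq_take] at hp
    have hct : L.count true = L.dropLast.count true + 1 := by
      conv_lhs => rw [← hd]
      simp [hb, List.count_append]
    have hcf : L.count false = L.dropLast.count false := by
      conv_lhs => rw [← hd]
      simp [hb, List.count_append]
    omega

lemma returns_pos {L : List Bool} (hne : L ≠ []) (hbal : L.count true = L.count false)
    (hpref : ∀ k, (L.take k).count false ≤ (L.take k).count true) :
    1 ≤ returns L := by
  have h1 : 1 ≤ L.length := List.length_pos_iff.2 hne
  rw [returns_eq_countP]
  refine List.countP_pos_iff.2 ⟨L.length - 1, List.mem_range.2 (by omega), ?_⟩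
  unfold rpred
  rw [last_eq_false hne hbal hpref, show L.length - 1 + 1 = L.length by omega, List.take_length]
  simp [hbal]

lemma returns_one {L : List Bool} (hne : L ≠ []) (hbal : L.count true = L.count false)
    (hpos : ∀ k, 0 < k → k < L.length → (L.take k).count false < (L.take k).count true) :
    returns L = 1 := by
  have hlen : 1 ≤ L.length := List.length_pos_iff.2 hne
  have hpref : ∀ k, (L.take k).count false ≤ (L.take k).count true := by
    intro k
    rcases Nat.eq_zero_or_pos k with rfl | hk
    · simp
    · by_cases hkl : k < L.length
      · exact le_of_lt (hpos k hk hkl)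
      · rw [List.take_of_length_le (by omega)]; omega
  rw [returns_eq_countP, show L.length = (L.length - 1) + 1 by omega, List.range_succ,
    List.countP_append]
  have h2 : (List.range (L.length - 1)).countP (rpred L) = 0 := by
    rw [List.countP_eq_zero]
    intro i hi
    rw [List.mem_range] at hi
    unfold rpred
    simp only [Bool.and_eq_true, beq_iff_eq, not_and]
    intro _
    have := hpos (i + 1) (by omega) (by omega)
    omega
  have h3 : List.countP (rpred L) [L.length - 1] = 1 := by
    simp only [List.countP_cons, List.countP_nil]
    have hlf := last_eq_false hne hbal hpref
    unfold rpred
    rw [hlf, show L.length - 1 + 1 = L.length by omega, List.take_length]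
    simp [hbal]
  omega

lemma interior_pos {L : List Bool} (hbal : L.count true = L.count false)
    (hpref : ∀ k, (L.take k).count false ≤ (L.take k).count true)
    (hret : returns L = 1) :
    ∀ k, 0 < k → k < L.length → (L.take k).count false < (L.take k).count true := by
  intro k hk hkl
  by_contra hcon
  have heq : (L.take k).count true = (L.take k).count false := by
    have := hpref k; omega
  have hAB : L.take k ++ L.drop k = L := List.take_append_drop k L
  have hct := congrArg (List.count true) hAB
  have hcf := congrArg (List.count false) hAB
  rw [List.count_append] at hct hcf
  have hAne : L.take k ≠ [] := by
    rw [← List.length_pos_iff, List.length_take]; omega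
  have hBne : L.drop k ≠ [] := by
    rw [← List.length_pos_iff, List.length_drop]; omega
  have hApref : ∀ j, ((L.take k).take j).count false ≤ ((L.take k).take j).count true := by
    intro j; rw [List.take_take]
    exact hpref _
  have hBpref : ∀ j, ((L.drop k).take j).count false ≤ ((L.drop k).take j).count true := by
    intro j
    have h5 : L.take (k + j) = L.take k ++ (L.drop k).take j := List.take_add
    have h6 := hpref (k + j)
    rw [h5, List.count_append, List.count_append] at h6
    omega
  have hsplit : returns L = returns (L.take k) + returns (L.drop k) := by
    conv_lhs => rw [← hAB]
    exact returns_append heq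
  have r1 := returns_pos hAne heq hApref
  have r2 := returns_pos hBne (by omega) hBpref
  omega

lemma ldr_eq {L : List Bool} {m : ℕ}
    (h : ((List.range L.length).filter
        (fun i => (L[i]? == some true) && (L[i+1]? == some true))).getLast? = some m) :
    ldr L = (L.take (m + 1)).count true := by
  unfold ldr
  rw [h]

lemma getLast?_filter_range {p : ℕ → Bool} {m n : ℕ} (h1 : m < n) (h2 : p m = true)
    (h3 : ∀ j, m < j → j < n → p j = false) :
    ((List.range n).filter p).getLast? = some m := by
  rw [show n = (m + 1) + (n - (m + 1)) by omega, List.range_add, List.filter_append,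
    List.range_succ, List.filter_append]
  have e1 : List.filter p [m] = [m] := by simp [h2]
  have e2 : List.filter p (List.map (fun x => m + 1 + x) (List.range (n - (m + 1)))) = [] := by
    rw [List.filter_eq_nil_iff]
    intro a ha
    simp only [List.mem_map, List.mem_range] at ha
    obtain ⟨x, hx, rfl⟩ := ha
    rw [h3 _ (by omega) (by omega)]
    simp
  rw [e1, e2, List.append_nil, List.getLast?_concat]

lemma gel (X Y : List Bool) (j t : ℕ) (h : j = X.length + t) : (X ++ Y)[j]? = Y[t]? := by
  subst h
  rw [List.getElem?_append_right (by omega)]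
  congr 1
  omega

lemma dyck_flatten (l : List (List Bool)) (h : ∀ x ∈ l, isDyck x = true) :
    (∀ k, (l.flatten.take k).count false ≤ (l.flatten.take k).count true) ∧
      l.flatten.count true = l.flatten.count false := by
  induction l with
  | nil => simp
  | cons x xs ih =>
    have hx := isDyck_iff.1 (h x (by simp))
    have ihs := ih (fun y hy => h y (by simp [hy]))
    rw [List.flatten_cons]
    constructor
    · intro k
      rw [count_take_app, count_take_app]
      have := hx.1 k
      have := ihs.1 (k - x.length)
      omega
    · rw [List.count_append, List.count_append]
      omega

lemma ite_tf {n : ℕ} : (if true = false then n else 0) = 0 := rfl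
lemma ite_ft {n : ℕ} : (if false = true then n else 0) = 0 := rfl

lemma count_take_le (L : List Bool) (b : Bool) (k : ℕ) : (L.take k).count b ≤ k :=
  le_trans List.count_le_length (by rw [List.length_take]; omega)

lemma phi_pref (P B R : List Bool) (r s n0 : ℕ) (hr : 1 ≤ r) (hs : 1 ≤ s) (hn0 : 1 ≤ n0)
    (hPpref : ∀ k, (P.take k).count false ≤ (P.take k).count true)
    (hBpref : ∀ k, (B.take k).count false ≤ (B.take k).count true)
    (hCbal : B.count true + r = B.count false + s)
    (hRb : ∀ j, (R.take j).count false ≤ n0 + (R.take j).count true) (k : ℕ) :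
    ((P ++ (List.replicate (r-1) true ++ (B ++ ([true] ++ (List.replicate s false ++
        (List.replicate n0 true ++ R)))))).take k).count false ≤
    ((P ++ (List.replicate (r-1) true ++ (B ++ ([true] ++ (List.replicate s false ++
        (List.replicate n0 true ++ R)))))).take k).count true := by
  simp only [count_take_app, count_take_rep, count_take_single, List.length_replicate,
    List.length_append, List.length_cons, List.length_nil, ite_tf, ite_ft, eq_self_iff_true, if_true]
  have h1 := hPpref k
  have h2 := hBpref (k - P.length - (r - 1))
  have h3 := hRb (k - P.length - (r - 1) - B.length - (0 + 1) - s - n0)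
  have h4 := count_take_le R false (k - P.length - (r - 1) - B.length - (0 + 1) - s - n0)
  have h5 := count_take_le B false (k - P.length - (r - 1))
  by_cases hA : k ≤ P.length + (r - 1) + B.length
  · omega
  · rw [List.take_of_length_le (show B.length ≤ k - P.length - (r - 1) by omega)]
    omega

lemma returns_M (B : List Bool) (r s : ℕ) (hr : 1 ≤ r) (hs : 1 ≤ s)
    (hBpref : ∀ k, (B.take k).count false ≤ (B.take k).count true)
    (hCbal : B.count true + r = B.count false + s)
    (hr2 : 2 ≤ r ∨ B = []) :
    returns (List.replicate (r-1) true ++ (B ++ ([true] ++ List.replicate s false))) = 1 := by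
  apply returns_one
  · rw [← List.length_pos_iff]
    simp only [List.length_append, List.length_replicate, List.length_cons, List.length_nil]
    omega
  · simp [List.count_append, List.count_replicate]
    omega
  · intro k hk0 hklen
    simp only [List.length_append, List.length_replicate, List.length_cons,
      List.length_nil] at hklen
    simp only [count_take_app, count_take_rep, count_take_single, List.length_replicate,
      List.length_append, List.length_cons, List.length_nil, ite_tf, ite_ft,
      eq_self_iff_true, if_true]
    have h2 := hBpref (k - (r - 1))
    have h5 := count_take_le B false (k - (r - 1))
    rcases hr2 with h6 | h6
    · by_cases hA : k ≤ (r - 1) + B.length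
      · omega
      · rw [List.take_of_length_le (show B.length ≤ k - (r - 1) by omega)]
        omega
    · subst h6
      simp only [List.take_nil, List.count_nil, List.length_nil] at hklen hCbal h2 h5 ⊢
      omega

lemma returns_Z (R : List Bool) (n0 : ℕ) (hn0 : 1 ≤ n0) (hRne : R ≠ [])
    (hRbal : R.count false = n0 + R.count true)
    (hRst : ∀ j, j < R.length → (R.take j).count false < n0 + (R.take j).count true) :
    returns (List.replicate n0 true ++ R) = 1 := by
  have hR1 : 1 ≤ R.length := List.length_pos_iff.2 hRne
  apply returns_one
  · rw [← List.length_pos_iff]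
    simp only [List.length_append, List.length_replicate]
    omega
  · simp [List.count_append, List.count_replicate]
    omega
  · intro k hk0 hklen
    simp only [List.length_append, List.length_replicate] at hklen
    simp only [count_take_app, count_take_rep, List.length_replicate, ite_tf, ite_ft,
      eq_self_iff_true, if_true]
    have h3 := hRst (k - n0) (by omega)
    have h4 := count_take_le R false (k - n0)
    omega

lemma pred_false_of_fst {L : List Bool} {j : ℕ} (h : L[j]? = some false) :
    ((L[j]? == some true) && (L[j+1]? == some true)) = false := by
  rw [h]; rfl

lemma pred_false_of_snd {L : List Bool} {j : ℕ} (h : L[j+1]? = some false) :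
    ((L[j]? == some true) && (L[j+1]? == some true)) = false := by
  rw [h]; simp

lemma pred_false_of_R {V R : List Bool} {j : ℕ} (hSR : SingleRises R)
    (hj : V.length ≤ j) :
    (((V ++ R)[j]? == some true) && ((V ++ R)[j+1]? == some true)) = false := by
  have e1 : (V ++ R)[j]? = R[j - V.length]? := gel _ _ _ _ (by omega)
  have e2 : (V ++ R)[j+1]? = R[(j - V.length) + 1]? := gel _ _ _ _ (by omega)
  rw [Bool.eq_false_iff]
  intro hP
  rw [Bool.and_eq_true, beq_iff_eq, beq_iff_eq] at hP
  exact hSR (j - V.length) ⟨e1 ▸ hP.1, e2 ▸ hP.2⟩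

lemma ldr_D (P B R : List Bool) (n0 r s : ℕ) (hn0 : 1 ≤ n0) (hr : 1 ≤ r) (hs : 1 ≤ s)
    (hr2 : 2 ≤ r ∨ (r = 1 ∧ B = [])) (hSR : SingleRises R) :
    ldr (P ++ (List.replicate n0 true ++ (B ++ (List.replicate r true ++
      (List.replicate s false ++ R))))) = P.count true + n0 + B.count true + (r - 1) := by
  set L := P ++ (List.replicate n0 true ++ (B ++ (List.replicate r true ++
      (List.replicate s false ++ R)))) with hL
  have hlen : L.length = P.length + (n0 + (B.length + (r + (s + R.length)))) := by
    rw [hL]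
    simp only [List.length_append, List.length_replicate]
  have hm : ldr L = (L.take ((P.length + n0 + B.length + r - 2) + 1)).count true := by
    apply ldr_eq
    apply getLast?_filter_range (by omega)
    · -- p m
      have e2 : L[(P.length + n0 + B.length + r - 2) + 1]? = some true := by
        rw [hL, gel P _ _ (n0 + (B.length + (r - 1))) (by omega),
          gel _ _ _ (B.length + (r - 1)) (by rw [List.length_replicate]),
          gel B _ _ (r - 1) (by omega),
          List.getElem?_append_left (by rw [List.length_replicate]; omega),
          List.getElem?_replicate, if_pos (by omega)]
      have e1 : L[P.length + n0 + B.length + r - 2]? = some true := by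
        rcases hr2 with h6 | ⟨h6, h7⟩
        · rw [hL, gel P _ _ (n0 + (B.length + (r - 2))) (by omega),
            gel _ _ _ (B.length + (r - 2)) (by rw [List.length_replicate]),
            gel B _ _ (r - 2) (by omega),
            List.getElem?_append_left (by rw [List.length_replicate]; omega),
            List.getElem?_replicate, if_pos (by omega)]
        · subst h6; subst h7
          rw [hL, gel P _ _ (n0 - 1) (by simp; omega),
            List.getElem?_append_left (by rw [List.length_replicate]; omega),
            List.getElem?_replicate, if_pos (by omega)]
      rw [e1, e2]
      rfl
    · -- no later pair
      intro j hj hjl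
      rw [hlen] at hjl
      by_cases hc1 : j = P.length + n0 + B.length + r - 1
      · apply pred_false_of_snd
        subst hc1
        rw [hL, gel P _ _ (n0 + (B.length + r)) (by omega),
          gel _ _ _ (B.length + r) (by rw [List.length_replicate]),
          gel B _ _ r (by omega),
          gel _ _ _ 0 (by simp),
          List.getElem?_append_left (by rw [List.length_replicate]; omega),
          List.getElem?_replicate, if_pos (by omega)]
      · by_cases hc2 : j < P.length + n0 + B.length + r + s
        · apply pred_false_of_fst
          rw [hL, gel P _ _ (j - P.length) (by omega),
            gel _ _ _ (j - P.length - n0) (by rw [List.length_replicate]; omega),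
            gel B _ _ (j - P.length - n0 - B.length) (by omega),
            gel _ _ _ (j - P.length - n0 - B.length - r) (by rw [List.length_replicate]; omega),
            List.getElem?_append_left (by rw [List.length_replicate]; omega),
            List.getElem?_replicate, if_pos (by omega)]
        · have hgroup : L = (P ++ (List.replicate n0 true ++ (B ++ (List.replicate r true ++
              List.replicate s false)))) ++ R := by
            rw [hL]; simp [List.append_assoc]
          rw [hgroup]
          apply pred_false_of_R hSR
          simp only [List.length_append, List.length_replicate]
          omega
  rw [hm, hL]
  simp only [count_take_app, count_take_rep, List.length_replicate, List.length_append,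
    ite_tf, ite_ft, eq_self_iff_true, if_true]
  rw [List.take_of_length_le (show P.length ≤ P.length + n0 + B.length + r - 2 + 1 by omega),
    List.take_of_length_le (show B.length ≤ P.length + n0 + B.length + r - 2 + 1 - P.length - n0 by omega)]
  have h4 := count_take_le R true (P.length + n0 + B.length + r - 2 + 1 - P.length - n0 - B.length - r - s)
  omega

lemma ldr_phi (P B R : List Bool) (n0 r s : ℕ) (hn0 : 1 ≤ n0) (hr : 1 ≤ r) (hs : 1 ≤ s)
    (hSR : SingleRises R) (hRhead : R[0]? = some true) (hRne : R ≠ []) :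
    ldr (P ++ (List.replicate (r-1) true ++ (B ++ ([true] ++ (List.replicate s false ++
      (List.replicate n0 true ++ R)))))) = P.count true + B.count true + r + n0 := by
  set L := P ++ (List.replicate (r-1) true ++ (B ++ ([true] ++ (List.replicate s false ++
      (List.replicate n0 true ++ R))))) with hL
  have hR1 : 1 ≤ R.length := List.length_pos_iff.2 hRne
  have hlen : L.length = P.length + ((r-1) + (B.length + (1 + (s + (n0 + R.length))))) := by
    rw [hL]
    simp only [List.length_append, List.length_replicate, List.length_cons, List.length_nil]
  have hgroup : L = (P ++ (List.replicate (r-1) true ++ (B ++ ([true] ++ (List.replicate s false ++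
      List.replicate n0 true))))) ++ R := by
    rw [hL]; simp [List.append_assoc]
  have hm : ldr L = (L.take ((P.length + (r-1) + B.length + 1 + s + n0 - 1) + 1)).count true := by
    apply ldr_eq
    apply getLast?_filter_range (by omega)
    · have e1 : L[P.length + (r-1) + B.length + 1 + s + n0 - 1]? = some true := by
        rw [hL, gel P _ _ ((r-1) + (B.length + (1 + (s + (n0 - 1))))) (by omega),
          gel _ _ _ (B.length + (1 + (s + (n0 - 1)))) (by rw [List.length_replicate]),
          gel B _ _ (1 + (s + (n0 - 1))) (by omega),
          gel _ _ _ (s + (n0 - 1)) (by simp),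
          gel _ _ _ (n0 - 1) (by rw [List.length_replicate]),
          List.getElem?_append_left (by rw [List.length_replicate]; omega),
          List.getElem?_replicate, if_pos (by omega)]
      have e2 : L[(P.length + (r-1) + B.length + 1 + s + n0 - 1) + 1]? = some true := by
        rw [hgroup, gel _ R _ 0 (by simp only [List.length_append, List.length_replicate,
          List.length_cons, List.length_nil]; omega), hRhead]
      rw [e1, e2]
      rfl
    · intro j hj hjl
      rw [hgroup]
      apply pred_false_of_R hSR
      simp only [List.length_append, List.length_replicate, List.length_cons, List.length_nil]
      omega
  rw [hm, hL]
  simp only [count_take_app, count_take_rep, count_take_single, List.length_replicate,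
    List.length_append, List.length_cons, List.length_nil, ite_tf, ite_ft,
    eq_self_iff_true, if_true]
  rw [List.take_of_length_le (show P.length ≤ P.length + (r-1) + B.length + 1 + s + n0 - 1 + 1 by omega),
    List.take_of_length_le (show B.length ≤ P.length + (r-1) + B.length + 1 + s + n0 - 1 + 1 - P.length - (r-1) by omega)]
  have h4 := count_take_le R true (P.length + (r-1) + B.length + 1 + s + n0 - 1 + 1 - P.length - (r-1) - B.length - (0+1) - s - n0)
  omega
end S7

/-- Case (2) of the map `φ`: if `n₁ = ⋯ = nₖ = ∅`, let `m` be the final maximal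
run of north steps of `Q` (after `n₀`) minus one step, and `Q'` the path `Q`
with `n₀` and `m` erased; then `φ(D) = P m Q' n₀ R` is a Dyck path of the same
semilength with one more return and `ldr` one larger.  Here
`Q = n₀ ++ B ++ Nʳ ++ Eˢ` with `B` not ending in a north step exhibits the
final run. -/

theorem stmt7 (n : ℕ) (D P Q R : List Bool) (n0 : ℕ) (Q1 : List Bool)
    (rest : List (ℕ × List Bool)) (B : List Bool) (r s : ℕ)
    (hD : D ∈ dyckPaths n) (h1 : ¬ EndsSingleEast D) (h2 : ldr D < n - 1)
    (hsplit : D = P ++ Q ++ R)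
    (hR : SingleRises R) (hRh : R = [] ∨ R.head? = some true)
    (hQl : Q.getLast? = some false)
    (hprime : IsPrimeDyck (Q ++ R))
    (hmax : ∀ P' Q' R' : List Bool, D = P' ++ Q' ++ R' → SingleRises R' →
      (R' = [] ∨ R'.head? = some true) → Q'.getLast? = some false →
      IsPrimeDyck (Q' ++ R') → R'.length ≤ R.length)
    (hdecomp : Q = primeBlocks ((n0, Q1) :: rest))
    (hQ1 : IsPrimeDyck Q1) (hprimes : ∀ p ∈ rest, IsPrimeDyck p.2)
    (hn0 : 1 ≤ n0)
    (hcase : ∀ p ∈ rest, p.1 = 0)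
    (hrun : Q = List.replicate n0 true ++
      (B ++ List.replicate r true ++ List.replicate s false))
    (hB : B.getLast? ≠ some true) (hr : 1 ≤ r) (hs : 1 ≤ s) :
    (P ++ List.replicate (r - 1) true ++
        (B ++ [true] ++ List.replicate s false) ++
        List.replicate n0 true ++ R) ∈ dyckPaths n ∧
    returns (P ++ List.replicate (r - 1) true ++
        (B ++ [true] ++ List.replicate s false) ++
        List.replicate n0 true ++ R) = returns D + 1 ∧
    ldr (P ++ List.replicate (r - 1) true ++
        (B ++ [true] ++ List.replicate s false) ++
        List.replicate n0 true ++ R) = ldr D + 1 := by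
  classical
  obtain ⟨hDd, hDt, hDf⟩ := S7.mem_dyckPaths.1 hD
  obtain ⟨hDpref, hDbal⟩ := S7.isDyck_iff.1 hDd
  obtain ⟨hQRd, hQRne, hQRret⟩ := hprime
  obtain ⟨hQRpref, hQRbal⟩ := S7.isDyck_iff.1 hQRd
  have hmapeq : rest.map (fun p => List.replicate p.1 true ++ p.2) = rest.map Prod.snd :=
    List.map_congr_left (fun p hp => by rw [hcase p hp]; simp)
  have hQdecomp : Q = (List.replicate n0 true ++ Q1) ++ (rest.map Prod.snd).flatten := by
    rw [hdecomp]; unfold primeBlocks; rw [List.map_cons, List.flatten_cons, hmapeq]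
  have hCeq : Q1 ++ (rest.map Prod.snd).flatten =
      B ++ (List.replicate r true ++ List.replicate s false) := by
    apply List.append_cancel_left (as := List.replicate n0 true)
    have h0 := hQdecomp.symm.trans hrun
    rw [List.append_assoc] at h0
    rw [h0]
    simp [List.append_assoc]
  have hCDy := S7.dyck_flatten (Q1 :: rest.map Prod.snd) (by
    intro x hx
    rcases List.mem_cons.1 hx with rfl | hx
    · exact hQ1.1
    · obtain ⟨p, hp, rfl⟩ := List.mem_map.1 hx
      exact (hprimes p hp).1)
  have hCpref : ∀ k, ((B ++ (List.replicate r true ++ List.replicate s false)).take k).count false ≤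
      ((B ++ (List.replicate r true ++ List.replicate s false)).take k).count true := by
    have := hCDy.1; rwa [List.flatten_cons, hCeq] at this
  have hCbal' : (B ++ (List.replicate r true ++ List.replicate s false)).count true =
      (B ++ (List.replicate r true ++ List.replicate s false)).count false := by
    have := hCDy.2; rwa [List.flatten_cons, hCeq] at this
  have hCbal : B.count true + r = B.count false + s := by
    simp only [List.count_append, List.count_replicate] at hCbal'
    simp at hCbal'
    omega
  have hBpref : ∀ k, (B.take k).count false ≤ (B.take k).count true := by
    intro k
    by_cases hk : k ≤ B.length
    · have := hCpref k; rwa [List.take_append_of_le_length hk] at this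
    · have h1' := hCpref B.length
      rw [List.take_left] at h1'
      rw [List.take_of_length_le (by omega)]
      exact h1'
  have hQt : Q.count true = n0 + B.count true + r := by
    rw [hrun]; simp [List.count_append, List.count_replicate]; try omega
  have hQf : Q.count false = B.count false + s := by
    rw [hrun]; simp [List.count_append, List.count_replicate]; try omega
  have hQRt : Q.count true + R.count true = Q.count false + R.count false := by
    have h3 := hQRbal
    rw [List.count_append, List.count_append] at h3
    exact h3
  have hRbal : R.count false = n0 + R.count true := by omega
  have hRne : R ≠ [] := by
    intro h; rw [h] at hRbal; simp at hRbal; omega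
  have hRhead : R[0]? = some true := by
    rcases hRh with h | h
    · exact absurd h hRne
    · rw [← List.head?_eq_getElem?]; exact h
  have hDt' : D.count true = P.count true + (Q.count true + R.count true) := by
    rw [hsplit]; simp [List.count_append]
  have hDf' : D.count false = P.count false + (Q.count false + R.count false) := by
    rw [hsplit]; simp [List.count_append]
  have hPbal : P.count true = P.count false := by omega
  have hPpref : ∀ k, (P.take k).count false ≤ (P.take k).count true := by
    intro k
    by_cases hk : k ≤ P.length
    · have h3 := hDpref k
      rw [hsplit, List.take_append_of_le_length (by rw [List.length_append]; omega),
        List.take_append_of_le_length hk] at h3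
      exact h3
    · rw [List.take_of_length_le (by omega)]; omega
  have hRb : ∀ j, (R.take j).count false ≤ n0 + (R.take j).count true := by
    intro j
    have h3 := hQRpref (Q.length + j)
    rw [S7.count_take_app, S7.count_take_app,
      List.take_of_length_le (show Q.length ≤ Q.length + j by omega),
      show Q.length + j - Q.length = j by omega] at h3
    omega
  have hQRstrict := S7.interior_pos hQRbal hQRpref hQRret
  have hRst : ∀ j, j < R.length → (R.take j).count false < n0 + (R.take j).count true := by
    intro j hj
    have h3 := hQRstrict (Q.length + j) (by
        have : Q ≠ [] := by
          intro hq; rw [hq] at hQl; simp at hQl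
        have := List.length_pos_iff.2 this
        omega)
      (by rw [List.length_append]; omega)
    rw [S7.count_take_app, S7.count_take_app,
      List.take_of_length_le (show Q.length ≤ Q.length + j by omega),
      show Q.length + j - Q.length = j by omega] at h3
    omega
  have hr2 : 2 ≤ r ∨ (r = 1 ∧ B = []) := by
    by_cases h2r : 2 ≤ r
    · exact Or.inl h2r
    · right
      have hr1 : r = 1 := by omega
      refine ⟨hr1, ?_⟩
      by_contra hBne
      have hBlast : B.getLast? = some false := by
        cases hgl : B.getLast? with
        | none => exact absurd (List.getLast?_eq_none_iff.1 hgl) hBne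
        | some b =>
          cases b
          · rfl
          · exact absurd hgl hB
      have hD2 : D = P ++ (List.replicate n0 true ++ B) ++
          ([true] ++ (List.replicate s false ++ R)) := by
        rw [hsplit, hrun, hr1]
        simp [List.append_assoc]
      have hSR' : SingleRises ([true] ++ (List.replicate s false ++ R)) := by
        intro i
        rintro ⟨ha, hb⟩
        rw [show ([true] ++ (List.replicate s false ++ R)) =
          true :: (List.replicate s false ++ R) from rfl] at ha hb
        cases i with
        | zero =>
          rw [List.getElem?_cons_succ,
            List.getElem?_append_left (by rw [List.length_replicate]; omega),
            List.getElem?_replicate, if_pos (by omega)] at hb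
          simp at hb
        | succ i =>
          rw [List.getElem?_cons_succ] at ha hb
          by_cases hi : i < s
          · rw [List.getElem?_append_left (by rw [List.length_replicate]; omega),
              List.getElem?_replicate, if_pos hi] at ha
            simp at ha
          · rw [S7.gel _ _ _ (i - s) (by rw [List.length_replicate]; omega)] at ha
            rw [S7.gel _ _ _ (i - s + 1) (by rw [List.length_replicate]; omega)] at hb
            exact hR (i - s) ⟨ha, hb⟩
      have hQl' : (List.replicate n0 true ++ B).getLast? = some false := by
        rw [List.getLast?_append, hBlast]; rfl
      have hQR2 : (List.replicate n0 true ++ B) ++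
          ([true] ++ (List.replicate s false ++ R)) = Q ++ R := by
        rw [hrun, hr1]; simp [List.append_assoc]
      have hle := hmax P (List.replicate n0 true ++ B)
        ([true] ++ (List.replicate s false ++ R)) hD2 hSR' (Or.inr rfl) hQl'
        (by rw [hQR2]; exact ⟨hQRd, hQRne, hQRret⟩)
      simp only [List.length_append, List.length_replicate, List.length_cons,
        List.length_nil] at hle
      omega
  have hr2' : 2 ≤ r ∨ B = [] := hr2.imp id And.right
  have hφeq : P ++ List.replicate (r - 1) true ++
      (B ++ [true] ++ List.replicate s false) ++ List.replicate n0 true ++ R =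
      P ++ (List.replicate (r - 1) true ++ (B ++ ([true] ++ (List.replicate s false ++
      (List.replicate n0 true ++ R))))) := by
    simp [List.append_assoc]
  rw [hφeq]
  have hφt : (P ++ (List.replicate (r - 1) true ++ (B ++ ([true] ++ (List.replicate s false ++
      (List.replicate n0 true ++ R)))))).count true = n := by
    simp [List.count_append, List.count_replicate]
    omega
  have hφf : (P ++ (List.replicate (r - 1) true ++ (B ++ ([true] ++ (List.replicate s false ++
      (List.replicate n0 true ++ R)))))).count false = n := by
    simp [List.count_append, List.count_replicate]
    omega
  refine ⟨?_, ?_, ?_⟩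
  · exact S7.mem_dyckPaths.2 ⟨S7.isDyck_iff.2
      ⟨S7.phi_pref P B R r s n0 hr hs hn0 hPpref hBpref hCbal hRb, hφt.trans hφf.symm⟩,
      hφt, hφf⟩
  · have hretD : returns D = returns P + 1 := by
      rw [hsplit, List.append_assoc, S7.returns_append hPbal, hQRret]
    have hgroup2 : P ++ (List.replicate (r - 1) true ++ (B ++ ([true] ++ (List.replicate s false ++
        (List.replicate n0 true ++ R))))) =
        P ++ ((List.replicate (r - 1) true ++ (B ++ ([true] ++ List.replicate s false))) ++
        (List.replicate n0 true ++ R)) := by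
      simp [List.append_assoc]
    have hMbal : (List.replicate (r - 1) true ++ (B ++ ([true] ++ List.replicate s false))).count true =
        (List.replicate (r - 1) true ++ (B ++ ([true] ++ List.replicate s false))).count false := by
      simp [List.count_append, List.count_replicate]
      omega
    rw [hgroup2, S7.returns_append hPbal, S7.returns_append hMbal,
      S7.returns_M B r s hr hs hBpref hCbal hr2',
      S7.returns_Z R n0 hn0 hRne hRbal hRst, hretD]
  · have hldrD : ldr D = P.count true + n0 + B.count true + (r - 1) := by
      rw [show D = P ++ (List.replicate n0 true ++ (B ++ (List.replicate r true ++
        (List.replicate s false ++ R)))) from by rw [hsplit, hrun]; simp [List.append_assoc]]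
      exact S7.ldr_D P B R n0 r s hn0 hr hs hr2 hR
    rw [S7.ldr_phi P B R n0 r s hn0 hr hs hR hRhead hRne, hldrD]
    omega
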